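/- For all integers 1 ≤ j < k, ∑_{r=1}^{j} 1/√(r(r + k - j)) ≤ 1/√(1 + k - j) + 2·arsinh(√(j/(k-j))), and moreover if j ≥ ⌈k/2⌉ + 1 then ∑_{r=1}^{j} 1/√(r(r+k-j)) ≤ 2 log(9k/(k-j)). -/

import Mathlib

lemma key_step (m r : ℝ) (hm : 1 ≤ m) (hr : 1 ≤ r) :
    1 / Real.sqrt (r * (r + m)) ≤
      2 * (Real.arsinh (Real.sqrt (r / m)) - Real.arsinh (Real.sqrt ((r - 1) / m))) := by
  have hm0 : (0:ℝ) < m := by linarith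
  have hr0 : (0:ℝ) < r := by linarith
  set a := Real.sqrt (r / m) with ha_def
  set b := Real.sqrt ((r - 1) / m) with hb_def
  have ha2 : a ^ 2 = r / m := Real.sq_sqrt (by positivity)
  have hb2 : b ^ 2 = (r - 1) / m := Real.sq_sqrt (div_nonneg (by linarith) hm0.le)
  have ha0 : 0 < a := Real.sqrt_pos.mpr (by positivity)
  have hb0 : 0 ≤ b := Real.sqrt_nonneg _
  have hba : b ≤ a := Real.sqrt_le_sqrt (by gcongr; linarith)
  set A := Real.sqrt (1 + a ^ 2) with hA_def
  set B := Real.sqrt (1 + b ^ 2) with hB_def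
  have hA2 : A ^ 2 = 1 + a ^ 2 := Real.sq_sqrt (by positivity)
  have hB2 : B ^ 2 = 1 + b ^ 2 := Real.sq_sqrt (by positivity)
  have hA0 : 0 < A := Real.sqrt_pos.mpr (by positivity)
  have hB0 : 0 < B := Real.sqrt_pos.mpr (by positivity)
  have hBA : B ≤ A := Real.sqrt_le_sqrt (by nlinarith)
  have hS : Real.sqrt (r * (r + m)) = m * a * A := by
    rw [show r * (r + m) = (m * a * A) ^ 2 by rw [mul_pow, mul_pow, ha2, hA2, ha2]; field_simp; ring,
      Real.sqrt_sq (by positivity)]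
  set u := a + A with hu_def
  set v := b + B with hv_def
  have hu0 : 0 < u := by positivity
  have hv0 : 0 < v := by positivity
  have harsinh : Real.arsinh a - Real.arsinh b = Real.log u - Real.log v := rfl
  have hlog : 1 - v / u ≤ Real.log u - Real.log v := by
    have h1 := Real.log_le_sub_one_of_pos (show 0 < v / u by positivity)
    rw [Real.log_div (ne_of_gt hv0) (ne_of_gt hu0)] at h1
    linarith
  have hab : (a - b) * (a + b) * m = 1 := by
    have h : (a - b) * (a + b) * m = (a ^ 2 - b ^ 2) * m := by ring
    rw [h, ha2, hb2]; field_simp; ring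
  have hAB : (A - B) * (A + B) * m = 1 := by
    have h : (A - B) * (A + B) * m = (A ^ 2 - B ^ 2) * m := by ring
    rw [h, hA2, hB2, ha2, hb2]; field_simp; ring
  have e1 : A ≤ 2 * ((a - b) * m) * a * A := by
    have h0 : 0 ≤ A * m * (a - b) ^ 2 := by positivity
    have h1 : A = A * ((a - b) * (a + b) * m) := by rw [hab]; ring
    have h2 : 2 * ((a - b) * m) * a * A - A * ((a - b) * (a + b) * m) = A * m * (a - b) ^ 2 := by
      ring
    linarith
  have e2 : a ≤ 2 * ((A - B) * m) * a * A := by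
    have h0 : 0 ≤ a * m * (A - B) ^ 2 := by positivity
    have h1 : a = a * ((A - B) * (A + B) * m) := by rw [hAB]; ring
    have h2 : 2 * ((A - B) * m) * a * A - a * ((A - B) * (A + B) * m) = a * m * (A - B) ^ 2 := by
      ring
    linarith
  have hmain : u ≤ 2 * (u - v) * (m * a * A) := by
    have hid : 2 * (u - v) * (m * a * A)
        = 2 * ((a - b) * m) * a * A + 2 * ((A - B) * m) * a * A := by
      rw [hu_def, hv_def]; ring
    rw [hu_def, hid]; linarith
  calc 1 / Real.sqrt (r * (r + m)) = 1 / (m * a * A) := by rw [hS]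
    _ ≤ 2 * (1 - v / u) := by
        rw [div_le_iff₀ (by positivity)]
        have hid : 2 * (1 - v / u) * (m * a * A) = 2 * (u - v) * (m * a * A) / u := by
          field_simp
        rw [hid, le_div_iff₀ hu0]
        linarith
    _ ≤ 2 * (Real.log u - Real.log v) := by linarith
    _ = 2 * (Real.arsinh a - Real.arsinh b) := by rw [harsinh]

lemma sum_bound (m : ℝ) (hm : 1 ≤ m) (j : ℕ) (hj : 1 ≤ j) :
    ∑ r ∈ Finset.Icc 1 j, 1 / Real.sqrt ((r:ℝ) * ((r:ℝ) + m))
      ≤ 1 / Real.sqrt (1 + m) + 2 * Real.arsinh (Real.sqrt ((j:ℝ) / m)) := by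
  induction j with
  | zero => omega
  | succ n ih =>
    rcases Nat.lt_or_ge 1 (n + 1) with h1 | h1
    · have hn : 1 ≤ n := by omega
      rw [Finset.sum_Icc_succ_top (by omega : 1 ≤ n + 1)]
      have hkey := key_step m ((n:ℝ) + 1) hm (by have := Nat.cast_nonneg (α:=ℝ) n; linarith)
      have hc : ((n:ℝ) + 1) - 1 = (n:ℝ) := by ring
      rw [hc] at hkey
      have := ih hn
      push_cast
      push_cast at this hkey
      linarith
    · have h0 : n = 0 := by omega
      subst h0
      simp only [Finset.Icc_self, Finset.sum_singleton, Nat.cast_one, one_mul]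
      have h2 : 0 ≤ Real.arsinh (Real.sqrt (1 / m)) := by
        rw [← Real.arsinh_zero]
        exact Real.arsinh_le_arsinh.mpr (Real.sqrt_nonneg _)
      push_cast
      linarith

theorem stmt12 (j k : ℕ) (hj : 1 ≤ j) (hjk : j < k) :
    (∑ r ∈ Finset.Icc 1 j, 1 / Real.sqrt ((r:ℝ) * ((r:ℝ) + (k:ℝ) - (j:ℝ)))
        ≤ 1 / Real.sqrt (1 + (k:ℝ) - (j:ℝ))
          + 2 * Real.arsinh (Real.sqrt ((j:ℝ) / ((k:ℝ) - (j:ℝ))))) ∧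
    ((k+1)/2 + 1 ≤ j →
      ∑ r ∈ Finset.Icc 1 j, 1 / Real.sqrt ((r:ℝ) * ((r:ℝ) + (k:ℝ) - (j:ℝ)))
        ≤ 2 * Real.log (9 * (k:ℝ) / ((k:ℝ) - (j:ℝ)))) := by
  have hjk' : (j:ℝ) + 1 ≤ (k:ℝ) := by exact_mod_cast hjk
  have hm : 1 ≤ (k:ℝ) - (j:ℝ) := by linarith
  have hm0 : (0:ℝ) < (k:ℝ) - (j:ℝ) := by linarith
  have hj0 : (1:ℝ) ≤ (j:ℝ) := by exact_mod_cast hj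
  have part1 : ∑ r ∈ Finset.Icc 1 j, 1 / Real.sqrt ((r:ℝ) * ((r:ℝ) + (k:ℝ) - (j:ℝ)))
      ≤ 1 / Real.sqrt (1 + (k:ℝ) - (j:ℝ))
        + 2 * Real.arsinh (Real.sqrt ((j:ℝ) / ((k:ℝ) - (j:ℝ)))) := by
    simpa only [add_sub_assoc] using sum_bound ((k:ℝ) - (j:ℝ)) hm j hj
  refine ⟨part1, fun h2 => ?_⟩
  set m : ℝ := (k:ℝ) - (j:ℝ) with hm_def
  have hk2 : k < 2 * j := by omega
  have hk2' : (k:ℝ) < 2 * (j:ℝ) := by exact_mod_cast hk2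
  have hmj : m ≤ (j:ℝ) := by rw [hm_def]; linarith
  set u := Real.sqrt ((j:ℝ) / m) with hu_def
  have hu1 : 1 ≤ u := by
    have h := Real.sqrt_le_sqrt ((one_le_div hm0).mpr hmj)
    rwa [Real.sqrt_one] at h
  have hu0 : 0 < u := by linarith
  have harsinh_le : Real.arsinh u ≤ Real.log (3 * u) := by
    rw [show Real.arsinh u = Real.log (u + Real.sqrt (1 + u ^ 2)) from rfl]
    have hsq : Real.sqrt (1 + u ^ 2) ≤ 2 * u := by
      rw [show (2:ℝ) * u = Real.sqrt ((2 * u) ^ 2) by rw [Real.sqrt_sq (by positivity)]]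
      exact Real.sqrt_le_sqrt (by nlinarith)
    exact Real.log_le_log (by positivity) (by linarith)
  have hu2 : u ^ 2 = (j:ℝ) / m := Real.sq_sqrt (by positivity)
  have hlog2 : 2 * Real.log (3 * u) = Real.log (9 * (j:ℝ) / m) := by
    rw [show (9:ℝ) * (j:ℝ) / m = (3 * u) ^ 2 by rw [mul_pow, hu2]; ring,
      Real.log_pow]
    push_cast; ring
  have hjk2 : Real.log (9 * (j:ℝ) / m) ≤ Real.log (9 * (k:ℝ) / m) := by
    apply Real.log_le_log (div_pos (by linarith) hm0)
    gcongr <;> linarith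
  have hone : 1 / Real.sqrt (1 + m) ≤ Real.log (9 * (k:ℝ) / m) := by
    have h1 : 1 / Real.sqrt (1 + m) ≤ 1 := by
      rw [div_le_one (Real.sqrt_pos.mpr (by linarith))]
      have h := Real.sqrt_le_sqrt (show (1:ℝ) ≤ 1 + m by linarith)
      rwa [Real.sqrt_one] at h
    have h2 : (1:ℝ) ≤ Real.log (9 * (k:ℝ) / m) := by
      rw [Real.le_log_iff_exp_le (div_pos (by linarith) hm0)]
      have he : Real.exp 1 < 2.7182818286 := Real.exp_one_lt_d9
      have hkm : (9:ℝ) ≤ 9 * (k:ℝ) / m := by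
        rw [le_div_iff₀ hm0]
        have : m ≤ (k:ℝ) := by rw [hm_def]; linarith
        nlinarith
      linarith
    linarith
  have hstep : 1 + m = 1 + (k:ℝ) - (j:ℝ) := by rw [hm_def]; ring
  calc ∑ r ∈ Finset.Icc 1 j, 1 / Real.sqrt ((r:ℝ) * ((r:ℝ) + (k:ℝ) - (j:ℝ)))
      ≤ 1 / Real.sqrt (1 + (k:ℝ) - (j:ℝ)) + 2 * Real.arsinh u := part1
    _ = 1 / Real.sqrt (1 + m) + 2 * Real.arsinh u := by rw [hstep]
    _ ≤ 1 / Real.sqrt (1 + m) + 2 * Real.log (3 * u) := by linarith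
    _ = 1 / Real.sqrt (1 + m) + Real.log (9 * (j:ℝ) / m) := by rw [hlog2]
    _ ≤ Real.log (9 * (k:ℝ) / m) + Real.log (9 * (k:ℝ) / m) := by linarith
    _ = 2 * Real.log (9 * (k:ℝ) / m) := by ring
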